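/- Abstract coercivity lemma (abstract content of the coercivity statement (2.11) in Theorem 2.1): Let U₁, U₂, V, H be real Hilbert spaces, V' the dual of V, and write U := U₁ × U₂ with ‖(u₁,u₂)‖²_U := ‖u₁‖² + ‖u₂‖². Let B : U₁ → V' be a continuous linear map, and let c : U₂ × U₂ → ℝ and d : U × U → ℝ be bilinear forms. Suppose there are continuous linear maps T : U₁ → H and E : H → U₁ with T ∘ E = id_H, and constants C₁, C₂, C₃ > 0 such that for all u = (u₁,u₂) ∈ U: (i) ‖u₁ − E(T u₁)‖_{U₁} ≤ C₁ ‖B u₁‖_{V'}, and (ii) ‖T u₁‖²_H + ‖u₂‖²_{U₂} ≤ C₂ ( c(u₂,u₂) + d(u,u) ) + C₃ ‖B u₁‖_{V'} ‖u‖_U. Then there exist κ₀ > 0 and α > 0 such that for every κ ≥ κ₀ and every u = (u₁,u₂) ∈ U: κ ‖B u₁‖²_{V'} + c(u₂,u₂) + d(u,u) ≥ α ‖u‖²_U. -/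

import Mathlib

set_option maxHeartbeats 1000000 in
/-- Abstract coercivity lemma (abstract content of the coercivity statement (2.11) in
Theorem 2.1): on `U := U₁ × U₂` with `‖(u₁,u₂)‖²_U := ‖u₁‖² + ‖u₂‖²`, suppose
`T : U₁ → H`, `E : H → U₁` are continuous linear with `T ∘ E = id`, and constants
`C₁, C₂, C₃ > 0` satisfy (i) `‖u₁ - E (T u₁)‖ ≤ C₁ ‖B u₁‖_{V'}` and
(ii) `‖T u₁‖² + ‖u₂‖² ≤ C₂ (c(u₂,u₂) + d(u,u)) + C₃ ‖B u₁‖ ‖u‖_U`.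
Then there are `κ₀ > 0` and `α > 0` such that for all `κ ≥ κ₀` and all `u = (u₁,u₂)`:
`κ ‖B u₁‖² + c(u₂,u₂) + d(u,u) ≥ α ‖u‖²_U`. -/
theorem abstract_coercivity
    {U₁ U₂ V H : Type*}
    [NormedAddCommGroup U₁] [InnerProductSpace ℝ U₁] [CompleteSpace U₁]
    [NormedAddCommGroup U₂] [InnerProductSpace ℝ U₂] [CompleteSpace U₂]
    [NormedAddCommGroup V] [InnerProductSpace ℝ V] [CompleteSpace V]
    [NormedAddCommGroup H] [InnerProductSpace ℝ H] [CompleteSpace H]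
    (B : U₁ →L[ℝ] StrongDual ℝ V)
    (c : U₂ →ₗ[ℝ] U₂ →ₗ[ℝ] ℝ)
    (d : (U₁ × U₂) →ₗ[ℝ] (U₁ × U₂) →ₗ[ℝ] ℝ)
    (T : U₁ →L[ℝ] H) (E : H →L[ℝ] U₁)
    (hTE : ∀ h : H, T (E h) = h)
    (C₁ C₂ C₃ : ℝ) (hC₁ : 0 < C₁) (hC₂ : 0 < C₂) (hC₃ : 0 < C₃)
    (hi : ∀ u₁ : U₁, ‖u₁ - E (T u₁)‖ ≤ C₁ * ‖B u₁‖)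
    (hii : ∀ (u₁ : U₁) (u₂ : U₂),
      ‖T u₁‖ ^ 2 + ‖u₂‖ ^ 2 ≤
        C₂ * (c u₂ u₂ + d (u₁, u₂) (u₁, u₂)) +
          C₃ * ‖B u₁‖ * Real.sqrt (‖u₁‖ ^ 2 + ‖u₂‖ ^ 2)) :
    ∃ κ₀ > 0, ∃ α > 0, ∀ κ ≥ κ₀, ∀ (u₁ : U₁) (u₂ : U₂),
      α * (‖u₁‖ ^ 2 + ‖u₂‖ ^ 2) ≤
        κ * ‖B u₁‖ ^ 2 + c u₂ u₂ + d (u₁, u₂) (u₁, u₂) := by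
  obtain ⟨M, hM⟩ : ∃ M : ℝ, M = 2 * ‖E‖ ^ 2 + 1 := ⟨_, rfl⟩
  have hM1 : (1:ℝ) ≤ M := by have := sq_nonneg ‖E‖; rw [hM]; linarith
  have hM0 : (0:ℝ) < M := by linarith
  obtain ⟨K, hK⟩ : ∃ K : ℝ, K = 2 * C₁ ^ 2 + M ^ 2 * C₃ ^ 2 := ⟨_, rfl⟩
  have hK0 : (0:ℝ) < K := by rw [hK]; positivity
  have hMC₂ : (0:ℝ) < M * C₂ := mul_pos hM0 hC₂
  refine ⟨K / (M * C₂), div_pos hK0 hMC₂, 3 / (4 * (M * C₂)), div_pos (by norm_num) (by linarith), ?_⟩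
  intro κ hκ u₁ u₂
  obtain ⟨s, hs⟩ : ∃ s : ℝ, s = ‖B u₁‖ := ⟨_, rfl⟩
  have hs0 : 0 ≤ s := hs ▸ norm_nonneg _
  obtain ⟨N, hN⟩ : ∃ N : ℝ, N = Real.sqrt (‖u₁‖ ^ 2 + ‖u₂‖ ^ 2) := ⟨_, rfl⟩
  have hN0 : 0 ≤ N := hN ▸ Real.sqrt_nonneg _
  have hNsq : N ^ 2 = ‖u₁‖ ^ 2 + ‖u₂‖ ^ 2 := by
    rw [hN]; exact Real.sq_sqrt (by positivity)
  obtain ⟨cd, hcd⟩ : ∃ cd : ℝ, cd = c u₂ u₂ + d (u₁, u₂) (u₁, u₂) := ⟨_, rfl⟩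
  -- step 1: ‖u₁‖ ≤ C₁ * s + ‖E‖ * ‖T u₁‖
  have h1 : ‖u₁‖ ≤ C₁ * s + ‖E‖ * ‖T u₁‖ := by
    rw [hs]
    calc ‖u₁‖ = ‖(u₁ - E (T u₁)) + E (T u₁)‖ := by rw [sub_add_cancel]
      _ ≤ ‖u₁ - E (T u₁)‖ + ‖E (T u₁)‖ := norm_add_le _ _
      _ ≤ C₁ * ‖B u₁‖ + ‖E‖ * ‖T u₁‖ := add_le_add (hi u₁) (E.le_opNorm _)
  have hE0 : 0 ≤ ‖E‖ := norm_nonneg _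
  have hT0 : 0 ≤ ‖T u₁‖ := norm_nonneg _
  -- step 2
  have h2 : ‖u₁‖ ^ 2 ≤ 2 * C₁ ^ 2 * s ^ 2 + 2 * ‖E‖ ^ 2 * ‖T u₁‖ ^ 2 := by
    nlinarith [norm_nonneg u₁, sq_nonneg (C₁ * s - ‖E‖ * ‖T u₁‖)]
  -- step 3
  have h3 : N ^ 2 ≤ 2 * C₁ ^ 2 * s ^ 2 + M * (‖T u₁‖ ^ 2 + ‖u₂‖ ^ 2) := by
    rw [hNsq, hM]
    nlinarith [sq_nonneg ‖T u₁‖, sq_nonneg ‖u₂‖]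
  have h4 : ‖T u₁‖ ^ 2 + ‖u₂‖ ^ 2 ≤ C₂ * cd + C₃ * s * N := by
    rw [hs, hN, hcd]; exact hii u₁ u₂
  -- Young
  have hyoung : M * C₃ * s * N ≤ M ^ 2 * C₃ ^ 2 * s ^ 2 + N ^ 2 / 4 := by
    nlinarith [sq_nonneg (M * C₃ * s - N / 2)]
  have hmul : M * (‖T u₁‖ ^ 2 + ‖u₂‖ ^ 2) ≤ M * C₂ * cd + M * C₃ * s * N := by
    calc M * (‖T u₁‖ ^ 2 + ‖u₂‖ ^ 2) ≤ M * (C₂ * cd + C₃ * s * N) :=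
          mul_le_mul_of_nonneg_left h4 hM0.le
      _ = M * C₂ * cd + M * C₃ * s * N := by ring
  have hKs : K * s ^ 2 = 2 * C₁ ^ 2 * s ^ 2 + M ^ 2 * C₃ ^ 2 * s ^ 2 := by rw [hK]; ring
  have h5 : (3 / 4) * N ^ 2 ≤ K * s ^ 2 + M * C₂ * cd := by linarith
  -- conclude
  have h6 : K * s ^ 2 ≤ κ * (M * C₂) * s ^ 2 :=
    mul_le_mul_of_nonneg_right ((div_le_iff₀ hMC₂).mp hκ) (sq_nonneg s)
  have h7 : 3 * N ^ 2 ≤ 4 * (M * C₂) * κ * s ^ 2 + 4 * (M * C₂) * cd := by linarith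
  have h4M : (0:ℝ) < 4 * (M * C₂) := by linarith
  have hfin' : 3 * N ^ 2 / (4 * (M * C₂)) ≤ κ * s ^ 2 + cd :=
    (div_le_iff₀ h4M).mpr (by linarith)
  have hfin : 3 / (4 * (M * C₂)) * N ^ 2 ≤ κ * s ^ 2 + cd := by
    have : 3 / (4 * (M * C₂)) * N ^ 2 = 3 * N ^ 2 / (4 * (M * C₂)) := by ring
    rw [this]; exact hfin'
  rw [hNsq, hs, hcd] at hfin
  linarith
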